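/- arXiv:1108.3829 — 4 statements merged into one kernel-verified Lean document; each statement's English description precedes it below -/
import Mathlib

section
/- Let λ > 0 and let Θ̂ be a graphical lasso solution at λ for S. Then a vertex i is isolated in the estimated concentration graph Ĝ^(λ) (i.e., Θ̂_ij = 0 for all j ≠ i) if and only if |S_ij| ≤ λ for all j ≠ i. -/
open Matrix

set_option linter.unusedSectionVars false
set_option linter.unusedVariables false
set_option maxHeartbeats 1000000
set_option synthInstance.maxHeartbeats 400000


/-- The graphical lasso objective: `f(Θ) = -log det Θ + tr(AΘ) + λ ∑_{i,j} |Θ_ij|`. -/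
noncomputable def glassoObj {n : Type*} [Fintype n] [DecidableEq n]
    (lam : ℝ) (A Θ : Matrix n n ℝ) : ℝ :=
  -Real.log Θ.det + (A * Θ).trace + lam * ∑ i, ∑ j, |Θ i j|

/-- `Θ` is a graphical lasso solution at `lam` for `A`: it is (symmetric) positive definite and
minimizes the graphical lasso objective over all symmetric positive definite matrices.
(Over `ℝ`, `Matrix.PosDef` includes symmetry.) -/
def IsGlassoSol {n : Type*} [Fintype n] [DecidableEq n]
    (lam : ℝ) (A Θ : Matrix n n ℝ) : Prop :=
  Θ.PosDef ∧ ∀ Ψ : Matrix n n ℝ, Ψ.PosDef → glassoObj lam A Θ ≤ glassoObj lam A Ψ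

/-- The thresholded sample covariance graph: an edge between distinct `i, j` iff `|S i j| > lam`. -/
def covGraph {n : Type*} (lam : ℝ) (S : Matrix n n ℝ) : SimpleGraph n :=
  SimpleGraph.fromRel (fun i j => lam < |S i j|)

/-- The estimated concentration graph: an edge between distinct `i, j` iff `Θ i j ≠ 0`. -/
def concGraph {n : Type*} (Θ : Matrix n n ℝ) : SimpleGraph n :=
  SimpleGraph.fromRel (fun i j => Θ i j ≠ 0)

namespace GlAux

variable {n : Type*} [Fintype n] [DecidableEq n]

lemma dot_mulVec_eq_sum (M : Matrix n n ℝ) (x y : n → ℝ) :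
    x ⬝ᵥ M *ᵥ y = ∑ a, ∑ b, x a * M a b * y b := by
  simp [dotProduct, mulVec, Finset.mul_sum, mul_assoc]

lemma symm_dot (M : Matrix n n ℝ) (h : ∀ a b, M a b = M b a) (u w : n → ℝ) :
    u ⬝ᵥ M *ᵥ w = (M *ᵥ u) ⬝ᵥ w := by
  rw [dot_mulVec_eq_sum]
  simp only [dotProduct, mulVec, Finset.sum_mul]
  rw [Finset.sum_comm]
  refine Finset.sum_congr rfl fun a _ => Finset.sum_congr rfl fun b _ => ?_
  rw [h b a]; ring

lemma quad_split (M : Matrix n n ℝ) (i : n)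
    (hrow : ∀ k, k ≠ i → M i k = 0) (hcol : ∀ k, k ≠ i → M k i = 0) (x : n → ℝ) :
    x ⬝ᵥ M *ᵥ x = M i i * (x i)^2
      + (Function.update x i 0) ⬝ᵥ M *ᵥ (Function.update x i 0) := by
  rw [dot_mulVec_eq_sum, dot_mulVec_eq_sum]
  set y := Function.update x i 0 with hy
  have key : ∀ a b, x a * M a b * x b
      = y a * M a b * y b + (if a = i ∧ b = i then M i i * (x i)^2 else 0) := by
    intro a b
    by_cases ha : a = i
    · by_cases hb : b = i
      · subst ha; subst hb; simp [hy]; ring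
      · subst ha; simp [hrow b hb, hb]
    · by_cases hb : b = i
      · subst hb; simp [hcol a ha, ha]
      · simp [hy, Function.update_of_ne ha, Function.update_of_ne hb, ha]
  calc ∑ a, ∑ b, x a * M a b * x b
      = ∑ a, ∑ b, (y a * M a b * y b + if a = i ∧ b = i then M i i * (x i)^2 else 0) :=
        Finset.sum_congr rfl fun a _ => Finset.sum_congr rfl fun b _ => key a b
    _ = M i i * (x i)^2 + ∑ a, ∑ b, y a * M a b * y b := by
        simp [Finset.sum_add_distrib, ite_and, Finset.sum_ite_eq', add_comm]

lemma mul_vecMulVec (M : Matrix n n ℝ) (a b : n → ℝ) :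
    M * vecMulVec a b = vecMulVec (M *ᵥ a) b := by
  ext x y
  simp [Matrix.mul_apply, vecMulVec_apply, mulVec, dotProduct, Finset.sum_mul, mul_assoc]

lemma vecMulVec_mul_vecMulVec (a b c d : n → ℝ) :
    vecMulVec a b * vecMulVec c d = (b ⬝ᵥ c) • vecMulVec a d := by
  ext x y
  simp only [Matrix.mul_apply, vecMulVec_apply, Matrix.smul_apply, smul_eq_mul, dotProduct,
    Finset.sum_mul]
  refine Finset.sum_congr rfl fun k _ => ?_
  ring

lemma vecMulVec_mulVec (a b x : n → ℝ) : vecMulVec a b *ᵥ x = (b ⬝ᵥ x) • a := by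
  ext k
  simp only [mulVec, vecMulVec_apply, dotProduct, Pi.smul_apply, smul_eq_mul, Finset.sum_mul]
  exact Finset.sum_congr rfl fun m _ => by ring

lemma expand (M : Matrix n n ℝ) (u w v z : n → ℝ) :
    M * (1 + vecMulVec u w) * (1 + vecMulVec v z)
      = M + vecMulVec (M *ᵥ u) w + vecMulVec (M *ᵥ v) z
        + (w ⬝ᵥ v) • vecMulVec (M *ᵥ u) z := by
  have h1 : M * (1 + vecMulVec u w) = M + vecMulVec (M *ᵥ u) w := by
    rw [mul_add, mul_one, mul_vecMulVec]
  rw [h1, add_mul, mul_add, mul_one, mul_add, mul_one, mul_vecMulVec,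
    vecMulVec_mul_vecMulVec]
  abel

lemma det_one_add_vecMulVec (u w : n → ℝ) : (1 + vecMulVec u w).det = 1 + w ⬝ᵥ u := by
  rw [vecMulVec_eq Unit, Matrix.det_one_add_replicateCol_mul_replicateRow]

lemma trace_mul_eq (S M : Matrix n n ℝ) : (S * M).trace = ∑ a, ∑ b, S a b * M b a := by
  simp [Matrix.trace, Matrix.diag, Matrix.mul_apply]

lemma trace_mul_vecMulVec (M : Matrix n n ℝ) (a b : n → ℝ) :
    (M * vecMulVec a b).trace = b ⬝ᵥ (M *ᵥ a) := by
  rw [mul_vecMulVec]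
  simp [Matrix.trace, Matrix.diag, vecMulVec_apply, dotProduct, mul_comm]

lemma sum_sum_split (f : n → n → ℝ) (i : n) :
    ∑ a, ∑ b, f a b
      = f i i + (∑ b ∈ Finset.univ.erase i, f i b) + (∑ a ∈ Finset.univ.erase i, f a i)
        + ∑ a ∈ Finset.univ.erase i, ∑ b ∈ Finset.univ.erase i, f a b := by
  rw [← Finset.add_sum_erase _ (fun a => ∑ b, f a b) (Finset.mem_univ i),
      ← Finset.add_sum_erase _ (fun b => f i b) (Finset.mem_univ i)]
  have h : ∀ a ∈ Finset.univ.erase i, ∑ b, f a b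
      = f a i + ∑ b ∈ Finset.univ.erase i, f a b :=
    fun a _ => (Finset.add_sum_erase _ (fun b => f a b) (Finset.mem_univ i)).symm
  rw [Finset.sum_congr rfl h, Finset.sum_add_distrib]
  ring

lemma neg_log_one_sub_le {u : ℝ} (h0 : 0 ≤ u) (h2 : u ≤ 1/2) : -Real.log (1 - u) ≤ 2*u := by
  have h1 : (0:ℝ) < 1 - u := by linarith
  have h := Real.log_le_sub_one_of_pos (x := (1-u)⁻¹) (by positivity)
  rw [Real.log_inv] at h
  have h3 : (1-u)⁻¹ - 1 = u / (1-u) := by field_simp; ring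
  have h4 : u / (1-u) ≤ 2*u := by
    rw [div_le_iff₀ h1]; nlinarith
  linarith

lemma diag_pos {M : Matrix n n ℝ} (hM : M.PosDef) (i : n) : 0 < M i i := by
  have h := hM.dotProduct_mulVec_pos (x := Pi.single i 1) (by
    intro h; have := congrFun h i; simp at this)
  simpa [mulVec_single, single_dotProduct] using h

lemma symm_entries' {M : Matrix n n ℝ} (h : M.IsHermitian) (a b : n) : M a b = M b a := by
  conv_lhs => rw [← h]
  simp [conjTranspose_apply]

lemma double_ind (i j : n) (hij : i ≠ j) (r : ℝ) :
    ∑ a, ∑ b, (if a = i ∧ b = j then r else if a = j ∧ b = i then r else 0) = r + r := by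
  have h : ∀ a : n, (∑ b, (if a = i ∧ b = j then r else if a = j ∧ b = i then r else 0))
      = (if a = i then r else 0) + (if a = j then r else 0) := by
    intro a
    rcases eq_or_ne a i with rfl|ha
    · simp [hij, Finset.sum_ite_eq']
    · rcases eq_or_ne a j with rfl|ha'
      · simp [ha, Finset.sum_ite_eq']
      · simp [ha, ha']
  rw [Finset.sum_congr rfl fun a _ => h a, Finset.sum_add_distrib]
  simp [Finset.sum_ite_eq', hij.symm]

lemma inv_col_struct {M : Matrix n n ℝ} (hM : M.PosDef) (i : n)
    (hrow : ∀ k, k ≠ i → M i k = 0) :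
    ∀ k, M⁻¹ k i = if k = i then (M i i)⁻¹ else 0 := by
  have hdet : IsUnit M.det := isUnit_iff_ne_zero.mpr hM.det_pos.ne'
  have hMii : 0 < M i i := diag_pos hM i
  have hcol : ∀ k, k ≠ i → M k i = 0 := fun k hk => by
    rw [symm_entries' hM.1]; exact hrow k hk
  have h1 : M *ᵥ Pi.single i (M i i)⁻¹ = Pi.single i 1 := by
    ext k
    rw [mulVec_single]
    rcases eq_or_ne k i with rfl|hk
    · simp [mul_inv_cancel₀ hMii.ne']
    · simp [hcol k hk, Pi.single_eq_of_ne hk]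
  have h2 : M⁻¹ *ᵥ Pi.single i 1 = Pi.single i (M i i)⁻¹ := by
    rw [← h1, mulVec_mulVec, Matrix.nonsing_inv_mul M hdet, one_mulVec]
  intro k
  have h3 := congrFun h2 k
  rw [mulVec_single] at h3
  simp only [Pi.smul_apply, col_apply, op_smul_eq_mul, mul_one] at h3
  rw [h3, Pi.single_apply]

lemma inv_row_struct {M : Matrix n n ℝ} (hM : M.PosDef) (i : n)
    (hrow : ∀ k, k ≠ i → M i k = 0) :
    ∀ k, M⁻¹ i k = if k = i then (M i i)⁻¹ else 0 := by
  intro k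
  rw [symm_entries' hM.1.inv]
  exact inv_col_struct hM i hrow k

end GlAux

namespace GlAux

lemma small_of_row_zero {n : Type*} [Fintype n] [DecidableEq n]
    (S Θ : Matrix n n ℝ) (hS : S.PosSemidef) {lam : ℝ}
    (hPD : Θ.PosDef) (hmin : ∀ Ψ : Matrix n n ℝ, Ψ.PosDef → glassoObj lam S Θ ≤ glassoObj lam S Ψ)
    (i : n) (hz : ∀ k, k ≠ i → Θ i k = 0) :
    ∀ j, j ≠ i → |S i j| ≤ lam := by
  intro j hj
  have hsymΘ : ∀ a b, Θ a b = Θ b a := symm_entries' hPD.1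
  have hsymS : ∀ a b, S a b = S b a := symm_entries' hS.1
  have hcol : ∀ k, k ≠ i → Θ k i = 0 := fun k hk => by rw [hsymΘ]; exact hz k hk
  set c := Θ i i with hc_def
  have hc : 0 < c := diag_pos hPD i
  have hdetΘ : 0 < Θ.det := hPD.det_pos
  have hdetu : IsUnit Θ.det := isUnit_iff_ne_zero.mpr hdetΘ.ne'
  set B := Θ⁻¹ with hB
  have hBPD : B.PosDef := hPD.inv
  set d := B j j with hd_def
  have hd : 0 < d := diag_pos hBPD j
  set κ := c⁻¹ * d with hκ_def
  have hκ : 0 < κ := by positivity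
  have hBrow : ∀ k, B i k = if k = i then c⁻¹ else 0 := inv_row_struct hPD i hz
  set m := B *ᵥ (Pi.single j 1 : n → ℝ) with hm
  have hΘm : Θ *ᵥ m = (Pi.single j 1 : n → ℝ) := by
    rw [hm, mulVec_mulVec, Matrix.mul_nonsing_inv Θ hdetu, one_mulVec]
  have hmj : m j = d := by simp [hm, mulVec_single, hd_def]
  have hmi : m i = 0 := by simp [hm, mulVec_single, hBrow j, hj]
  have hΘδi : Θ *ᵥ (Pi.single i 1 : n → ℝ) = c • (Pi.single i 1 : n → ℝ) := by
    ext k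
    rcases eq_or_ne k i with rfl|hk
    · simp [mulVec_single, hc_def]
    · simp [mulVec_single, hcol k hk, Pi.single_eq_of_ne hk]
  -- the master inequality
  have key : ∀ s : ℝ, 0 < s → s^2 * κ ≤ 1/2 → |S i j| ≤ lam + s * κ := by
    intro s hs hs2
    have hfactorpos : 0 < 1 - s^2*κ := by nlinarith
    set t : ℝ := if 0 ≤ S i j then -s else s with ht
    have ht2 : t^2 = s^2 := by rw [ht]; split_ifs <;> ring
    have habs_t : |t| = s := by
      rw [ht]; split_ifs
      · rw [abs_neg, abs_of_pos hs]
      · rw [abs_of_pos hs]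
    have htS : t * S i j = -(s * |S i j|) := by
      rw [ht]; split_ifs with h
      · rw [abs_of_nonneg h]; ring
      · rw [abs_of_neg (lt_of_not_ge h)]; ring
    set Ψ := Θ + t • (vecMulVec ((Pi.single i 1 : n → ℝ)) ((Pi.single j 1 : n → ℝ))
        + vecMulVec ((Pi.single j 1 : n → ℝ)) ((Pi.single i 1 : n → ℝ))) with hΨ
    have hΨapply : ∀ a b, Ψ a b = Θ a b
        + t * ((Pi.single i 1 : n → ℝ) a * (Pi.single j 1 : n → ℝ) b + (Pi.single j 1 : n → ℝ) a * (Pi.single i 1 : n → ℝ) b) := by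
      intro a b
      simp [hΨ, vecMulVec_apply, mul_add]
    -- positive definiteness of Ψ
    have htd : t^2 * d ≤ c/2 := by
      have e1 : s^2*(c⁻¹*d)*c = s^2*d := by field_simp
      have e2 := mul_le_mul_of_nonneg_right hs2 hc.le
      rw [ht2]
      rw [hκ_def] at e2
      nlinarith
    have hΨPD : Ψ.PosDef := by
      refine Matrix.PosDef.of_dotProduct_mulVec_pos ?_ ?_
      · ext a b
        simp only [conjTranspose_apply, RCLike.star_def, starRingEnd_apply, star_trivial]
        rw [hΨapply a b, hΨapply b a, hsymΘ b a]
        ring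
      · intro x hx
        rw [star_trivial]
        have hQ : x ⬝ᵥ Ψ *ᵥ x = x ⬝ᵥ Θ *ᵥ x + 2*t*(x i * x j) := by
          rw [hΨ, add_mulVec, dotProduct_add, smul_mulVec, add_mulVec,
            vecMulVec_mulVec, vecMulVec_mulVec, dotProduct_smul]
          simp only [dotProduct_add, dotProduct_smul, smul_eq_mul,
            dotProduct_single, single_dotProduct, mul_one, one_mul]
          ring
        rw [hQ, quad_split Θ i hz hcol x]
        set y := Function.update x i 0 with hy
        have hyi : y i = 0 := Function.update_self _ _ _
        have hyj : y j = x j := Function.update_of_ne hj _ _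
        have hy_nonneg : 0 ≤ y ⬝ᵥ Θ *ᵥ y := by
          have := hPD.posSemidef.dotProduct_mulVec_nonneg y; simpa using this
        by_cases hy0 : y = 0
        · have hxi : x i ≠ 0 := by
            intro h0
            apply hx
            funext k
            by_cases hk : k = i
            · subst hk; exact h0
            · have := congrFun hy0 k
              rwa [hy, Function.update_of_ne hk] at this
          have hxj : x j = 0 := by rw [← hyj, hy0]; rfl
          rw [hxj, hy0]
          have h0 : (0:ℝ) < c * (x i)^2 := by positivity
          simpa using h0
        · -- Cauchy-Schwarz : (y j)^2 ≤ d * (y ⬝ᵥ Θ *ᵥ y)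
          have hq : 0 < y ⬝ᵥ Θ *ᵥ y := by
            have := hPD.dotProduct_mulVec_pos hy0; simpa using this
          have hCS : (y j)^2 ≤ d * (y ⬝ᵥ Θ *ᵥ y) := by
            set r := y j / d with hr
            set z := y - r • m with hzdef
            have hz0 : 0 ≤ z ⬝ᵥ Θ *ᵥ z := by
              have := hPD.posSemidef.dotProduct_mulVec_nonneg z; simpa using this
            have e1 : y ⬝ᵥ (Pi.single j 1 : n → ℝ) = y j := by
              rw [dotProduct_single, mul_one]
            have e2 : m ⬝ᵥ (Θ *ᵥ y) = y j := by
              rw [symm_dot Θ hsymΘ m y, hΘm, single_dotProduct, one_mul]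
            have e3 : m ⬝ᵥ (Pi.single j 1 : n → ℝ) = d := by
              rw [dotProduct_single, mul_one, hmj]
            have hexp : z ⬝ᵥ Θ *ᵥ z = y ⬝ᵥ Θ *ᵥ y - 2*r*(y j) + r^2 * d := by
              have e0 : Θ *ᵥ z = Θ *ᵥ y - r • (Pi.single j 1 : n → ℝ) := by
                rw [hzdef, mulVec_sub, mulVec_smul, hΘm]
              rw [e0, hzdef, sub_dotProduct, dotProduct_sub, dotProduct_sub,
                smul_dotProduct, smul_dotProduct, dotProduct_smul, dotProduct_smul,
                e1, e2, e3]
              simp only [smul_eq_mul]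
              ring
            have h5 : 2*r*(y j) - r^2*d = (y j)^2/d := by
              rw [hr]; field_simp; ring
            have h6 : (y j)^2/d ≤ y ⬝ᵥ Θ *ᵥ y := by
              rw [hexp] at hz0; linarith
            calc (y j)^2 = ((y j)^2/d) * d := by field_simp
              _ ≤ (y ⬝ᵥ Θ *ᵥ y) * d := mul_le_mul_of_nonneg_right h6 hd.le
              _ = d * (y ⬝ᵥ Θ *ᵥ y) := mul_comm _ _
          rw [← hyj]
          nlinarith [sq_nonneg (c * x i + t * y j),
            mul_le_mul_of_nonneg_left hCS (sq_nonneg t),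
            mul_le_mul_of_nonneg_right htd hq.le, mul_pos hc hq]
    -- determinant of Ψ
    set u := t • m with hu
    set v := (t*c⁻¹) • (Pi.single i 1 : n → ℝ) - (t^2*c⁻¹) • m with hv
    have hΘu : Θ *ᵥ u = t • (Pi.single j 1 : n → ℝ) := by rw [hu, mulVec_smul, hΘm]
    have hΘv : Θ *ᵥ v = t • (Pi.single i 1 : n → ℝ) - (t^2*c⁻¹) • (Pi.single j 1 : n → ℝ) := by
      rw [hv, mulVec_sub, mulVec_smul, mulVec_smul, hΘδi, hΘm, smul_smul]
      congr 1
      congr 1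
      field_simp
    have hwv : (Pi.single i 1 : n → ℝ) ⬝ᵥ v = t * c⁻¹ := by
      rw [hv, dotProduct_sub, dotProduct_smul, dotProduct_smul, dotProduct_single,
        single_dotProduct, hmi]
      simp
    have hfacΨ : Ψ = Θ * (1 + vecMulVec u ((Pi.single i 1 : n → ℝ)))
        * (1 + vecMulVec v ((Pi.single j 1 : n → ℝ))) := by
      rw [expand, hΘu, hΘv, hwv]
      ext a b
      rw [Matrix.add_apply, Matrix.add_apply, Matrix.add_apply, hΨapply a b]
      simp only [vecMulVec_apply, Matrix.smul_apply, smul_eq_mul, Pi.sub_apply, Pi.smul_apply]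
      ring
    have hdetΨ : Ψ.det = Θ.det * (1 - s^2*κ) := by
      rw [hfacΨ, det_mul, det_mul, det_one_add_vecMulVec, det_one_add_vecMulVec]
      have h1 : (Pi.single i 1 : n → ℝ) ⬝ᵥ u = 0 := by
        rw [hu, dotProduct_smul, single_dotProduct, hmi]; simp
      have h2 : (Pi.single j 1 : n → ℝ) ⬝ᵥ v = -(s^2*κ) := by
        rw [hv, dotProduct_sub, dotProduct_smul, dotProduct_smul, dotProduct_single,
          single_dotProduct, hmj, Pi.single_eq_of_ne (Ne.symm hj), hκ_def, ← ht2]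
        simp only [smul_eq_mul, mul_zero, mul_one, one_mul]
        ring
      rw [h1, h2]
      ring
    -- trace of S * Ψ
    have htrΨ : (S*Ψ).trace = (S*Θ).trace + 2*(t * S i j) := by
      rw [hΨ, mul_add, trace_add, Matrix.mul_smul, trace_smul, mul_add, trace_add,
        trace_mul_vecMulVec, trace_mul_vecMulVec]
      have e1 : (Pi.single j 1 : n → ℝ) ⬝ᵥ (S *ᵥ (Pi.single i 1 : n → ℝ)) = S j i := by
        simp [mulVec_single, single_dotProduct]
      have e2 : (Pi.single i 1 : n → ℝ) ⬝ᵥ (S *ᵥ (Pi.single j 1 : n → ℝ)) = S i j := by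
        simp [mulVec_single, single_dotProduct]
      rw [e1, e2, hsymS j i]
      simp only [smul_eq_mul]
      ring
    -- l1 norm of Ψ
    have hl1Ψ : ∑ a, ∑ b, |Ψ a b| = (∑ a, ∑ b, |Θ a b|) + (s + s) := by
      have key2 : ∀ a b, |Ψ a b| = |Θ a b|
          + (if a = i ∧ b = j then s else if a = j ∧ b = i then s else 0) := by
        intro a b
        rw [hΨapply a b]
        simp only [Pi.single_apply]
        by_cases hai : a = i
        · by_cases hbj : b = j
          · simp [hai, hbj, hz j hj, hj, Ne.symm hj, habs_t]
          · simp [hai, hbj, hj, Ne.symm hj]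
        · by_cases haj : a = j
          · by_cases hbi : b = i
            · simp [haj, hbi, hj, Ne.symm hj, hcol j hj, habs_t]
            · simp [haj, hbi, hj, Ne.symm hj]
          · simp [hai, haj]
      rw [Finset.sum_congr rfl fun a _ => Finset.sum_congr rfl fun b _ => key2 a b]
      rw [Finset.sum_congr rfl fun a (_ : a ∈ Finset.univ) => Finset.sum_add_distrib,
        Finset.sum_add_distrib, double_ind i j (Ne.symm hj) s]
    -- assemble
    have hcomp := hmin Ψ hΨPD
    unfold glassoObj at hcomp
    have hlogΨ : Real.log Ψ.det = Real.log Θ.det + Real.log (1 - s^2*κ) := by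
      rw [hdetΨ, Real.log_mul hdetΘ.ne' hfactorpos.ne']
    have hlogbound : -Real.log (1 - s^2*κ) ≤ 2*(s^2*κ) :=
      neg_log_one_sub_le (by positivity) hs2
    rw [htrΨ, hl1Ψ, hlogΨ, htS] at hcomp
    have hfin : 2*s*|S i j| ≤ 2*(s^2*κ) + 2*lam*s := by nlinarith [hcomp, hlogbound]
    nlinarith [hfin, hs, mul_pos hs hκ]
  -- epsilon endgame
  refine le_of_forall_pos_le_add fun ε hε => ?_
  set s := min (ε/κ) (min 1 (1/(2*κ))) with hs_def
  have hs : 0 < s := lt_min (by positivity) (lt_min one_pos (by positivity))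
  have hs1 : s ≤ ε/κ := min_le_left _ _
  have hs2' : s ≤ 1 := le_trans (min_le_right _ _) (min_le_left _ _)
  have hs3 : s ≤ 1/(2*κ) := le_trans (min_le_right _ _) (min_le_right _ _)
  have h1 : s*κ ≤ 1/2 := by
    rw [le_div_iff₀ (by positivity : (0:ℝ) < 2*κ)] at hs3
    nlinarith
  have hcond : s^2*κ ≤ 1/2 := by nlinarith [hs.le, hs2', h1, hκ]
  have hkey := key s hs hcond
  have hsκ : s*κ ≤ ε := by
    calc s*κ ≤ (ε/κ)*κ := mul_le_mul_of_nonneg_right hs1 hκ.le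
      _ = ε := div_mul_cancel₀ ε hκ.ne'
  linarith

end GlAux
namespace GlAux

lemma row_zero_of_small {n : Type*} [Fintype n] [DecidableEq n]
    (S Θ : Matrix n n ℝ) (hS : S.PosSemidef) {lam : ℝ}
    (hPD : Θ.PosDef)
    (hmin : ∀ Ψ : Matrix n n ℝ, Ψ.PosDef → glassoObj lam S Θ ≤ glassoObj lam S Ψ)
    (i : n) (habs : ∀ j, j ≠ i → |S i j| ≤ lam) :
    ∀ j, j ≠ i → Θ i j = 0 := by
  have hsymΘ : ∀ a b, Θ a b = Θ b a := symm_entries' hPD.1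
  have hsymS : ∀ a b, S a b = S b a := symm_entries' hS.1
  set c := Θ i i with hc_def
  have hc : 0 < c := diag_pos hPD i
  set θv : n → ℝ := fun k => if k = i then 0 else Θ i k with hθv
  have hθvi : θv i = 0 := by simp [hθv]
  set Θt : Matrix n n ℝ :=
    Matrix.of (fun a b => if a = i ∨ b = i then (if a = b then c else 0) else Θ a b) with hΘt
  have hTt_apply : ∀ a b, Θt a b
      = if a = i ∨ b = i then (if a = b then c else 0) else Θ a b := fun a b => rfl
  have hTt_row : ∀ k, k ≠ i → Θt i k = 0 := by
    intro k hk
    rw [hTt_apply, if_pos (Or.inl rfl), if_neg (Ne.symm hk)]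
  have hTt_col : ∀ k, k ≠ i → Θt k i = 0 := by
    intro k hk
    rw [hTt_apply, if_pos (Or.inr rfl), if_neg hk]
  have hTt_ii : Θt i i = c := by rw [hTt_apply, if_pos (Or.inl rfl), if_pos rfl]
  have hTt_off : ∀ a b, a ≠ i → b ≠ i → Θt a b = Θ a b := by
    intro a b ha hb
    rw [hTt_apply, if_neg (by tauto)]
  have hE : ∀ a b, Θ a b = Θt a b + θv a * (Pi.single i 1 : n → ℝ) b + (Pi.single i 1 : n → ℝ) a * θv b := by
    intro a b
    simp only [Pi.single_apply, hθv]
    by_cases ha : a = i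
    · by_cases hb : b = i
      · simp [ha, hb, hTt_ii, hc_def]
      · simp [ha, hb, hTt_row b hb]
    · by_cases hb : b = i
      · simp [ha, hb, hTt_col a ha, hsymΘ a i]
      · simp [ha, hb, hTt_off a b ha hb]
  have hTtsym : ∀ a b, Θt a b = Θt b a := by
    intro a b
    rw [hTt_apply, hTt_apply]
    by_cases h : a = i ∨ b = i
    · rw [if_pos h, if_pos (Or.symm h)]
      by_cases hab : a = b
      · rw [if_pos hab, if_pos hab.symm]
      · rw [if_neg hab, if_neg (Ne.symm hab)]
    · rw [if_neg h, if_neg (fun h' => h (Or.symm h')), hsymΘ a b]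
  have hTtherm : Θt.IsHermitian := by
    ext a b
    simp only [conjTranspose_apply, RCLike.star_def, starRingEnd_apply, star_trivial]
    exact hTtsym b a
  have hquadeq : ∀ y : n → ℝ, y i = 0 → y ⬝ᵥ Θt *ᵥ y = y ⬝ᵥ Θ *ᵥ y := by
    intro y hy
    rw [dot_mulVec_eq_sum, dot_mulVec_eq_sum]
    refine Finset.sum_congr rfl fun a _ => Finset.sum_congr rfl fun b _ => ?_
    by_cases ha : a = i
    · rw [ha, hy]; ring
    · by_cases hb : b = i
      · rw [hb, hy]; ring
      · rw [hTt_off a b ha hb]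
  have hTtPD : Θt.PosDef := by
    refine Matrix.PosDef.of_dotProduct_mulVec_pos hTtherm fun x hx => ?_
    rw [star_trivial, quad_split Θt i hTt_row hTt_col x]
    set y := Function.update x i 0 with hy
    have hyi : y i = 0 := Function.update_self _ _ _
    rw [hquadeq y hyi, hTt_ii]
    by_cases hy0 : y = 0
    · have hxi : x i ≠ 0 := by
        intro h0
        apply hx
        funext k
        by_cases hk : k = i
        · rw [hk]; exact h0
        · have := congrFun hy0 k
          rwa [hy, Function.update_of_ne hk] at this
      rw [hy0]
      have h0 : (0:ℝ) < c * (x i)^2 := by positivity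
      simpa using h0
    · have hq : 0 < y ⬝ᵥ Θ *ᵥ y := by
        have := hPD.dotProduct_mulVec_pos hy0; simpa using this
      have h0 : 0 ≤ c * (x i)^2 := by positivity
      linarith
  have hdetTt : 0 < Θt.det := hTtPD.det_pos
  have hdetΘ : 0 < Θ.det := hPD.det_pos
  have hdetu : IsUnit Θt.det := isUnit_iff_ne_zero.mpr hdetTt.ne'
  set B := Θt⁻¹ with hB
  have hBPD : B.PosDef := hTtPD.inv
  have hBrow : ∀ k, B i k = if k = i then c⁻¹ else 0 := by
    intro k
    simpa [hTt_ii] using inv_row_struct hTtPD i hTt_row k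
  set u := B *ᵥ θv with hu
  have hui : u i = 0 := by
    have h1 : u i = ∑ k, B i k * θv k := rfl
    rw [h1, Finset.sum_congr rfl (fun k _ => by rw [hBrow k, ite_mul, zero_mul])]
    simp [hθvi]
  have hTtu : Θt *ᵥ u = θv := by
    rw [hu, mulVec_mulVec, Matrix.mul_nonsing_inv Θt hdetu, one_mulVec]
  have hTtδ : Θt *ᵥ (Pi.single i 1 : n → ℝ) = c • (Pi.single i 1 : n → ℝ) := by
    ext k
    rcases eq_or_ne k i with rfl|hk
    · simp [mulVec_single, hTt_ii]
    · simp [mulVec_single, hTt_col k hk, Pi.single_eq_of_ne hk]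
  set v := c⁻¹ • ((Pi.single i 1 : n → ℝ) - u) with hv
  have hvi : v i = c⁻¹ := by simp [hv, hui]
  have hTtv : Θt *ᵥ v = (Pi.single i 1 : n → ℝ) - c⁻¹ • θv := by
    rw [hv, mulVec_smul, mulVec_sub, hTtδ, hTtu, smul_sub, smul_smul,
      inv_mul_cancel₀ hc.ne', one_smul]
  have hfac : Θ = Θt * (1 + vecMulVec u ((Pi.single i 1 : n → ℝ))) * (1 + vecMulVec v θv) := by
    rw [expand, hTtu, hTtv]
    have hδv : (Pi.single i 1 : n → ℝ) ⬝ᵥ v = c⁻¹ := by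
      rw [single_dotProduct, one_mul, hvi]
    rw [hδv]
    ext a b
    rw [Matrix.add_apply, Matrix.add_apply, Matrix.add_apply, hE a b]
    simp only [vecMulVec_apply, Matrix.smul_apply, smul_eq_mul, Pi.sub_apply, Pi.smul_apply]
    ring
  set q := θv ⬝ᵥ u with hq
  have hq0 : 0 ≤ q := by
    have h := hBPD.posSemidef.dotProduct_mulVec_nonneg θv
    rw [star_trivial] at h
    rw [hq, hu]
    exact h
  have hdet_eq : Θ.det = Θt.det * (1 - c⁻¹ * q) := by
    rw [hfac, det_mul, det_mul, det_one_add_vecMulVec, det_one_add_vecMulVec]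
    have h1 : (Pi.single i 1 : n → ℝ) ⬝ᵥ u = 0 := by rw [single_dotProduct, one_mul, hui]
    have h2 : θv ⬝ᵥ v = -(c⁻¹*q) := by
      rw [hv, dotProduct_smul, dotProduct_sub, dotProduct_single, hθvi, ← hq]
      simp only [smul_eq_mul, zero_mul]
      ring
    rw [h1, h2]
    ring
  have hΘeq : Θ = Θt + vecMulVec θv ((Pi.single i 1 : n → ℝ)) + vecMulVec ((Pi.single i 1 : n → ℝ)) θv := by
    ext a b
    rw [Matrix.add_apply, Matrix.add_apply]
    simp only [vecMulVec_apply]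
    exact hE a b
  have htr : (S * Θ).trace
      = (S * Θt).trace + 2 * ∑ k ∈ Finset.univ.erase i, S i k * Θ i k := by
    conv_lhs => rw [hΘeq]
    rw [mul_add, mul_add, trace_add, trace_add, trace_mul_vecMulVec, trace_mul_vecMulVec]
    have e1 : (Pi.single i 1 : n → ℝ) ⬝ᵥ (S *ᵥ θv)
        = ∑ k ∈ Finset.univ.erase i, S i k * Θ i k := by
      rw [single_dotProduct, one_mul]
      have h1 : (S *ᵥ θv) i = ∑ k, S i k * θv k := rfl
      rw [h1, ← Finset.add_sum_erase _ (fun k => S i k * θv k) (Finset.mem_univ i), hθvi,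
        mul_zero, zero_add]
      refine Finset.sum_congr rfl fun k hk => ?_
      simp only [hθv]
      rw [if_neg (Finset.mem_erase.mp hk).1]
    have e2 : θv ⬝ᵥ (S *ᵥ (Pi.single i 1 : n → ℝ))
        = ∑ k ∈ Finset.univ.erase i, S i k * Θ i k := by
      have h1 : θv ⬝ᵥ (S *ᵥ (Pi.single i 1 : n → ℝ)) = ∑ k, θv k * S k i := by
        rw [mulVec_single]
        simp [dotProduct]
      rw [h1, ← Finset.add_sum_erase _ (fun k => θv k * S k i) (Finset.mem_univ i), hθvi,
        zero_mul, zero_add]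
      refine Finset.sum_congr rfl fun k hk => ?_
      have hk' := (Finset.mem_erase.mp hk).1
      simp only [hθv]
      rw [if_neg hk', hsymS k i, mul_comm]
    rw [e1, e2]
    ring
  have hl1 : ∑ a, ∑ b, |Θ a b|
      = (∑ a, ∑ b, |Θt a b|) + 2 * ∑ k ∈ Finset.univ.erase i, |Θ i k| := by
    rw [sum_sum_split (fun a b => |Θ a b|) i, sum_sum_split (fun a b => |Θt a b|) i]
    have h1 : ∑ b ∈ Finset.univ.erase i, |Θt i b| = 0 :=
      Finset.sum_eq_zero fun b hb => by rw [hTt_row b (Finset.mem_erase.mp hb).1, abs_zero]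
    have h2 : ∑ a ∈ Finset.univ.erase i, |Θt a i| = 0 :=
      Finset.sum_eq_zero fun a ha => by rw [hTt_col a (Finset.mem_erase.mp ha).1, abs_zero]
    have h3 : (∑ a ∈ Finset.univ.erase i, ∑ b ∈ Finset.univ.erase i, |Θt a b|)
        = ∑ a ∈ Finset.univ.erase i, ∑ b ∈ Finset.univ.erase i, |Θ a b| :=
      Finset.sum_congr rfl fun a ha => Finset.sum_congr rfl fun b hb => by
        rw [hTt_off a b (Finset.mem_erase.mp ha).1 (Finset.mem_erase.mp hb).1]
    have h4 : |Θt i i| = |Θ i i| := by rw [hTt_ii, hc_def]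
    have h5 : ∑ a ∈ Finset.univ.erase i, |Θ a i| = ∑ k ∈ Finset.univ.erase i, |Θ i k| :=
      Finset.sum_congr rfl fun a _ => by rw [hsymΘ a i]
    rw [h1, h2, h3, h4, h5]
    ring
  have hfactor : 0 < 1 - c⁻¹*q := by
    by_contra hle
    push_neg at hle
    have := mul_nonpos_of_nonneg_of_nonpos hdetTt.le hle
    linarith [hdet_eq ▸ hdetΘ]
  have hlog : Real.log Θ.det = Real.log Θt.det + Real.log (1 - c⁻¹*q) := by
    rw [hdet_eq, Real.log_mul hdetTt.ne' hfactor.ne']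
  have hcomp := hmin Θt hTtPD
  unfold glassoObj at hcomp
  rw [hlog, htr, hl1] at hcomp
  have hdistrib : lam * ((∑ a, ∑ b, |Θt a b|) + 2 * ∑ k ∈ Finset.univ.erase i, |Θ i k|)
      = lam * (∑ a, ∑ b, |Θt a b|) + 2*(lam * ∑ k ∈ Finset.univ.erase i, |Θ i k|) := by
    ring
  rw [hdistrib] at hcomp
  set T := ∑ k ∈ Finset.univ.erase i, (S i k * Θ i k + lam * |Θ i k|) with hT
  have hsum : (∑ k ∈ Finset.univ.erase i, lam * |Θ i k|)
      = lam * ∑ k ∈ Finset.univ.erase i, |Θ i k| := by rw [Finset.mul_sum]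
  have hTsplit : T = (∑ k ∈ Finset.univ.erase i, S i k * Θ i k)
      + lam * ∑ k ∈ Finset.univ.erase i, |Θ i k| := by
    rw [hT, Finset.sum_add_distrib, hsum]
  have hT0 : 0 ≤ T := Finset.sum_nonneg fun k hk => by
    have hk' : k ≠ i := (Finset.mem_erase.mp hk).1
    have h1 : |S i k| ≤ lam := habs k hk'
    have h2 : -(|S i k| * |Θ i k|) ≤ S i k * Θ i k := by
      rw [← abs_mul]; exact neg_abs_le _
    nlinarith [abs_nonneg (Θ i k), abs_nonneg (S i k)]
  have hlogT : 2*T ≤ Real.log (1 - c⁻¹*q) := by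
    rw [hTsplit]
    linarith [hcomp]
  have h1le : (1:ℝ) ≤ 1 - c⁻¹*q :=
    (Real.log_nonneg_iff hfactor).mp (by linarith)
  have hqle : q ≤ 0 := by
    have hcinv : 0 < c⁻¹ := by positivity
    nlinarith
  intro j hj
  by_contra hne
  have hθne : θv ≠ 0 := by
    intro h0
    have h1 := congrFun h0 j
    simp only [hθv, Pi.zero_apply] at h1
    rw [if_neg hj] at h1
    exact hne h1
  have hpos : 0 < q := by
    have h := hBPD.dotProduct_mulVec_pos hθne
    rw [star_trivial] at h
    rw [hq, hu]
    exact h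
  linarith

end GlAux

/-- a vertex `i` is isolated in the estimated concentration graph iff
`|S i j| ≤ lam` for all `j ≠ i`. -/
theorem glasso_isolated_node_iff
    (p : ℕ) (hp : 1 ≤ p) (S : Matrix (Fin p) (Fin p) ℝ) (hS : S.PosSemidef)
    (lam : ℝ) (hlam : 0 < lam)
    (Θ : Matrix (Fin p) (Fin p) ℝ) (hΘ : IsGlassoSol lam S Θ)
    (i : Fin p) :
    (∀ j : Fin p, j ≠ i → Θ i j = 0) ↔ (∀ j : Fin p, j ≠ i → |S i j| ≤ lam) := by
  obtain ⟨hPD, hmin⟩ := hΘ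
  constructor
  · intro hz
    exact GlAux.small_of_row_zero S Θ hS hPD hmin i hz
  · intro habs
    exact GlAux.row_zero_of_small S Θ hS hPD hmin i habs
end

section
/- Let m ≥ 1 be an integer, let W be a symmetric positive definite m×m real matrix, let s ∈ ℝ^m, let c > 0 and λ > 0 be reals, and define g(θ) = (1/2)·θᵀWθ + c·θᵀs + λ·c·∑_{j=1}^m |θ_j| for θ ∈ ℝ^m. Then the zero vector 0 ∈ ℝ^m minimizes g over ℝ^m if and only if max_{1 ≤ j ≤ m} |s_j| ≤ λ. -/
open Matrix

/-- the zero vector minimizes the lasso-type row subproblem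
`g(θ) = ½ θᵀWθ + c θᵀs + lam·c·∑_j |θ_j|` iff `max_j |s_j| ≤ lam`. -/
theorem lasso_row_subproblem_zero_iff
    (m : ℕ) (hm : 1 ≤ m) (W : Matrix (Fin m) (Fin m) ℝ) (hW : W.PosDef)
    (s : Fin m → ℝ) (c lam : ℝ) (hc : 0 < c) (hlam : 0 < lam) :
    (∀ θ : Fin m → ℝ,
        (1 / 2) * ((0 : Fin m → ℝ) ⬝ᵥ W.mulVec 0) + c * ((0 : Fin m → ℝ) ⬝ᵥ s)
            + lam * c * ∑ j, |(0 : Fin m → ℝ) j|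
          ≤ (1 / 2) * (θ ⬝ᵥ W.mulVec θ) + c * (θ ⬝ᵥ s) + lam * c * ∑ j, |θ j|)
      ↔ ∀ j : Fin m, |s j| ≤ lam := by
  have hzero : (1 / 2) * ((0 : Fin m → ℝ) ⬝ᵥ W.mulVec 0) + c * ((0 : Fin m → ℝ) ⬝ᵥ s)
      + lam * c * ∑ j, |(0 : Fin m → ℝ) j| = 0 := by
    simp
  constructor
  · intro h j
    have hWjj : 0 < W j j := by
      have h1 := hW.dotProduct_mulVec_pos (x := Pi.single j 1) (by
        intro hcon
        have := congrFun hcon j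
        simp at this)
      simpa [dotProduct, Matrix.mulVec, Pi.single_apply, Finset.sum_ite_eq',
        Finset.mul_sum] using h1
    by_contra hcon
    push_neg at hcon
    set t : ℝ := c * (|s j| - lam) / W j j with ht
    have htpos : 0 < t := div_pos (mul_pos hc (sub_pos.mpr hcon)) hWjj
    set a : ℝ := if 0 ≤ s j then -t else t with ha
    have haabs : |a| = t := by
      rcases le_or_gt 0 (s j) with h1 | h1
      · rw [ha, if_pos h1, abs_neg]; exact abs_of_pos htpos
      · rw [ha, if_neg (not_le.mpr h1)]; exact abs_of_pos htpos
    have hasj : a * s j = -(t * |s j|) := by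
      rcases le_or_gt 0 (s j) with h1 | h1
      · rw [ha, if_pos h1, abs_of_nonneg h1]; ring
      · rw [ha, if_neg (not_le.mpr h1), abs_of_neg h1]; ring
    have key := h (Pi.single j a)
    rw [hzero] at key
    have hq : (Pi.single j a : Fin m → ℝ) ⬝ᵥ W.mulVec (Pi.single j a) = a * W j j * a := by
      simp [dotProduct, Matrix.mulVec, Pi.single_apply, Finset.sum_ite_eq',
        Finset.mul_sum]
      ring
    have hd : (Pi.single j a : Fin m → ℝ) ⬝ᵥ s = a * s j := by
      simp [dotProduct, Pi.single_apply, Finset.sum_ite_eq']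
    have hsum : ∑ k, |(Pi.single j a : Fin m → ℝ) k| = |a| := by
      simp [Pi.single_apply, apply_ite abs, Finset.sum_ite_eq']
    rw [hq, hd, hsum, haabs, hasj] at key
    have hteq : t * W j j = c * (|s j| - lam) := by
      rw [ht]; field_simp
    have ha2 : a * a = t * t := by
      rw [← abs_mul_abs_self a, haabs]
    have ha2W : a * W j j * a = c * (|s j| - lam) * t := by
      calc a * W j j * a = a * a * W j j := by ring
        _ = t * (t * W j j) := by rw [ha2]; ring
        _ = c * (|s j| - lam) * t := by rw [hteq]; ring
    rw [ha2W] at key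
    nlinarith [mul_pos (mul_pos hc htpos) (sub_pos.mpr hcon)]
  · intro hs θ
    rw [hzero]
    have hq : 0 ≤ θ ⬝ᵥ W.mulVec θ := by
      have := hW.posSemidef.dotProduct_mulVec_nonneg θ
      simpa using this
    have hdot : -(lam * ∑ j, |θ j|) ≤ θ ⬝ᵥ s := by
      have h1 : |θ ⬝ᵥ s| ≤ lam * ∑ j, |θ j| := by
        calc |θ ⬝ᵥ s| = |∑ j, θ j * s j| := by rw [dotProduct]
          _ ≤ ∑ j, |θ j * s j| := Finset.abs_sum_le_sum_abs _ _
          _ ≤ ∑ j, lam * |θ j| := by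
              apply Finset.sum_le_sum
              intro j _
              rw [abs_mul, mul_comm]
              exact mul_le_mul_of_nonneg_right (hs j) (abs_nonneg _)
          _ = lam * ∑ j, |θ j| := (Finset.mul_sum _ _ _).symm
      linarith [neg_abs_le (θ ⬝ᵥ s)]
    have h2 := mul_le_mul_of_nonneg_left hdot hc.le
    nlinarith [hq, h2]
end

section
/- Let λ > 0 and suppose |S_ij| ≤ λ for all i ≠ j. Then the diagonal p×p matrix D with diagonal entries D_ii = 1/(S_ii + λ) (well defined since S_ii ≥ 0 and λ > 0) and D_ij = 0 for i ≠ j is a graphical lasso solution at λ for S. -/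
open Matrix

open Finset in
lemma trace_eq_sum_eigs {m : Type*} [Fintype m] [DecidableEq m]
    {M : Matrix m m ℝ} (hM : M.IsHermitian) :
    M.trace = ∑ i, hM.eigenvalues i := by
  simpa using hM.trace_eq_sum_eigenvalues

lemma trace_sub_log_det {m : Type*} [Fintype m] [DecidableEq m]
    {M : Matrix m m ℝ} (hM : M.PosDef) :
    (Fintype.card m : ℝ) ≤ M.trace - Real.log M.det := by
  rw [trace_eq_sum_eigs hM.1, hM.1.det_eq_prod_eigenvalues]
  have : ∀ i, (0:ℝ) < hM.1.eigenvalues i := hM.eigenvalues_pos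
  simp only [RCLike.ofReal_real_eq_id, id_eq]
  rw [Real.log_prod (fun i _ => (this i).ne'), ← Finset.sum_sub_distrib]
  calc (Fintype.card m : ℝ) = ∑ _i : m, (1:ℝ) := by simp
    _ ≤ _ := Finset.sum_le_sum fun i _ => by
        nlinarith [Real.log_le_sub_one_of_pos (this i)]

lemma posDef_diag_conj {m : Type*} [Fintype m] [DecidableEq m]
    {Ψ : Matrix m m ℝ} (hΨ : Ψ.PosDef) {d : m → ℝ} (hd : ∀ i, 0 < d i) :
    (diagonal d * Ψ * diagonal d).PosDef := by
  have hB : (diagonal d)ᴴ = diagonal d := by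
    simp [diagonal_conjTranspose]
  refine posDef_iff_dotProduct_mulVec.mpr ⟨?_, ?_⟩
  · rw [show diagonal d * Ψ * diagonal d = (diagonal d)ᴴ * Ψ * diagonal d by rw [hB]]
    exact isHermitian_conjTranspose_mul_mul _ hΨ.1
  · intro x hx
    have hx' : diagonal d *ᵥ x ≠ 0 := by
      intro h
      apply hx
      funext i
      have := congrFun h i
      simp only [mulVec_diagonal, Pi.zero_apply] at this
      exact (mul_eq_zero.mp this).resolve_left (hd i).ne' ▸ rfl
    have := hΨ.dotProduct_mulVec_pos hx'
    rw [show diagonal d * Ψ * diagonal d = (diagonal d)ᴴ * Ψ * diagonal d by rw [hB]]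
    simpa only [star_mulVec, dotProduct_mulVec, vecMul_vecMul] using this

lemma glasso_aux
    (p : ℕ) (hp : 1 ≤ p) (S : Matrix (Fin p) (Fin p) ℝ) (hS : S.PosSemidef)
    (lam : ℝ) (hlam : 0 < lam)
    (hsep : ∀ i j : Fin p, i ≠ j → |S i j| ≤ lam) :
    (diagonal fun i : Fin p => (S i i + lam)⁻¹).PosDef ∧
      ∀ Ψ : Matrix (Fin p) (Fin p) ℝ, Ψ.PosDef →
        glassoObj lam S (diagonal fun i : Fin p => (S i i + lam)⁻¹) ≤ glassoObj lam S Ψ := by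
  have hSdiag : ∀ i, 0 ≤ S i i := fun i => by
    have := hS.dotProduct_mulVec_nonneg (Pi.single i 1)
    simpa using this
  set a : Fin p → ℝ := fun i => S i i + lam with ha_def
  have ha : ∀ i, 0 < a i := fun i => add_pos_of_nonneg_of_pos (hSdiag i) hlam
  have hD : (diagonal fun i : Fin p => (a i)⁻¹).PosDef :=
    .diagonal fun i => inv_pos.2 (ha i)
  -- value at the diagonal candidate
  have hobjD : glassoObj lam S (diagonal fun i : Fin p => (a i)⁻¹)
      = (p : ℝ) + ∑ i, Real.log (a i) := by
    unfold glassoObj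
    rw [det_diagonal]
    have h1 : Real.log (∏ i, (a i)⁻¹) = -∑ i, Real.log (a i) := by
      rw [Real.log_prod (fun i _ => (inv_pos.2 (ha i)).ne')]
      simp [Real.log_inv]
    have h2 : (S * diagonal fun i : Fin p => (a i)⁻¹).trace = ∑ i, S i i * (a i)⁻¹ := by
      simp [Matrix.trace, Matrix.diag, Matrix.mul_diagonal]
    have h3 : ∑ i, ∑ j, |(diagonal fun i : Fin p => (a i)⁻¹) i j| = ∑ i, (a i)⁻¹ := by
      refine Finset.sum_congr rfl fun i _ => ?_
      rw [Finset.sum_eq_single i (fun j _ hj => by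
        rw [Matrix.diagonal_apply_ne _ (Ne.symm hj), abs_zero]) (by simp)]
      simp [abs_of_pos (inv_pos.2 (ha i))]
    rw [h1, h2, h3, neg_neg]
    have h4 : ∑ i, S i i * (a i)⁻¹ + lam * ∑ i, (a i)⁻¹ = (p : ℝ) := by
      rw [Finset.mul_sum, ← Finset.sum_add_distrib]
      have : ∀ i ∈ Finset.univ, S i i * (a i)⁻¹ + lam * (a i)⁻¹ = 1 := fun i _ => by
        rw [← add_mul]
        exact mul_inv_cancel₀ (ha i).ne'
      rw [Finset.sum_congr rfl this]
      simp
    linarith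
  refine ⟨hD, fun Ψ hΨ => ?_⟩
  have hΨd : ∀ i, 0 < Ψ i i := fun i => by
    have := hΨ.dotProduct_mulVec_pos (x := Pi.single i 1) (fun h => one_ne_zero (α := ℝ) (by simpa using congrFun h i))
    simpa using this
  have hsym : ∀ i j, Ψ j i = Ψ i j := fun i j => by
    have := congrFun (congrFun hΨ.1 i) j
    simpa using this
  -- step A
  have htr : (S * Ψ).trace = ∑ i, ∑ j, S i j * Ψ i j := by
    simp only [Matrix.trace, Matrix.diag, Matrix.mul_apply]
    exact Finset.sum_congr rfl fun i _ => Finset.sum_congr rfl fun j _ => by rw [hsym]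
  have stepA : ∑ i, a i * Ψ i i ≤ (S * Ψ).trace + lam * ∑ i, ∑ j, |Ψ i j| := by
    rw [htr, Finset.mul_sum, ← Finset.sum_add_distrib]
    refine Finset.sum_le_sum fun i _ => ?_
    rw [Finset.mul_sum, ← Finset.sum_add_distrib]
    have h0 : ∀ j ∈ Finset.univ, (0:ℝ) ≤ S i j * Ψ i j + lam * |Ψ i j| := by
      intro j _
      rcases eq_or_ne i j with rfl | hij
      · have h := hΨd i
        have := hSdiag i
        nlinarith [abs_nonneg (Ψ i i), le_abs_self (Ψ i i)]
      · have h1 : |S i j| ≤ lam := hsep i j hij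
        nlinarith [neg_abs_le (S i j * Ψ i j), abs_mul (S i j) (Ψ i j),
          abs_nonneg (Ψ i j), abs_nonneg (S i j)]
    calc a i * Ψ i i = S i i * Ψ i i + lam * |Ψ i i| := by
          rw [abs_of_pos (hΨd i), ha_def]; ring
      _ ≤ _ := Finset.single_le_sum h0 (Finset.mem_univ i)
  -- step B
  have stepB : (p : ℝ) + ∑ i, Real.log (a i)
      ≤ -Real.log Ψ.det + ∑ i, a i * Ψ i i := by
    set d : Fin p → ℝ := fun i => Real.sqrt (a i) with hd_def
    have hd : ∀ i, 0 < d i := fun i => Real.sqrt_pos.2 (ha i)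
    have hM := posDef_diag_conj hΨ hd
    have hMtr : (diagonal d * Ψ * diagonal d).trace = ∑ i, a i * Ψ i i := by
      simp only [Matrix.trace, Matrix.diag]
      refine Finset.sum_congr rfl fun i _ => ?_
      rw [Matrix.mul_diagonal, Matrix.diagonal_mul,
        show d i * Ψ i i * d i = (d i * d i) * Ψ i i by ring,
        Real.mul_self_sqrt (ha i).le]
    have hprod : (∏ i, d i) * (∏ i, d i) = ∏ i, a i := by
      rw [← Finset.prod_mul_distrib]
      exact Finset.prod_congr rfl fun i _ => Real.mul_self_sqrt (ha i).le
    have hMdet : (diagonal d * Ψ * diagonal d).det = (∏ i, a i) * Ψ.det := by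
      rw [Matrix.det_mul, Matrix.det_mul, det_diagonal,
        show (∏ i, d i) * Ψ.det * (∏ i, d i) = ((∏ i, d i) * (∏ i, d i)) * Ψ.det by ring,
        hprod]
    have hlog : Real.log (diagonal d * Ψ * diagonal d).det
        = (∑ i, Real.log (a i)) + Real.log Ψ.det := by
      rw [hMdet, Real.log_mul (Finset.prod_pos (fun i _ => ha i)).ne' hΨ.det_pos.ne',
        Real.log_prod fun i _ => (ha i).ne']
    have hcard := trace_sub_log_det hM
    rw [hMtr, hlog, Fintype.card_fin] at hcard
    linarith
  rw [hobjD]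
  unfold glassoObj
  linarith

/-- if all off-diagonal entries of `S` are at most `lam` in absolute value, then the
diagonal matrix with entries `1 / (S i i + lam)` is the graphical lasso solution at `lam`. -/
theorem glasso_diagonal_solution
    (p : ℕ) (hp : 1 ≤ p) (S : Matrix (Fin p) (Fin p) ℝ) (hS : S.PosSemidef)
    (lam : ℝ) (hlam : 0 < lam)
    (hsep : ∀ i j : Fin p, i ≠ j → |S i j| ≤ lam) :
    IsGlassoSol lam S (Matrix.diagonal fun i : Fin p => (S i i + lam)⁻¹) := by
  exact glasso_aux p hp S hS lam hlam hsep
end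

section
/- Let λ > 0 and let Θ̂ be a graphical lasso solution at λ for S. Let V₁,…,V_K be the vertex sets of the connected components of the thresholded sample covariance graph G^(λ). Then Θ̂_ij = 0 whenever i and j lie in distinct components, and for each ℓ the principal submatrix Θ̂[V_ℓ, V_ℓ] is a graphical lasso solution at λ for the principal submatrix S[V_ℓ, V_ℓ]. -/
open Matrix

section GlassoHelpers

variable {m l : Type*} {n : Type*} [Fintype n] [DecidableEq n] [Fintype m] [DecidableEq m]
  [Fintype l] [DecidableEq l]

omit [DecidableEq n] in
/-- A positive semidefinite real matrix with nonzero determinant is positive definite. -/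
lemma psd_posDef_of_det_ne_zero [DecidableEq n] {M : Matrix n n ℝ} (hM : M.PosSemidef)
    (hdet : M.det ≠ 0) : M.PosDef := by
  exact hM.posDef_iff_det_ne_zero.mpr hdet

omit [DecidableEq n] in
/-- Adding a nonzero positive semidefinite matrix to a positive definite matrix strictly
increases the determinant. -/
lemma det_lt_det_add_psd [DecidableEq n] {D X : Matrix n n ℝ} (hD : D.PosDef)
    (hX : X.PosSemidef) (hX0 : X ≠ 0) : D.det < (D + X).det := by
  have hDs := hD.posSemidef
  obtain ⟨R, hR, hRR⟩ : ∃ R : Matrix n n ℝ, R.PosSemidef ∧ R * R = D := by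
    open scoped MatrixOrder Matrix.Norms.L2Operator in
    exact ⟨CFC.sqrt D, (CFC.sqrt_nonneg D).posSemidef, CFC.sqrt_mul_sqrt_self D hDs.nonneg⟩
  have hdetR : R.det ≠ 0 := fun h => by
    have := hD.det_pos
    rw [← hRR, det_mul, h, zero_mul] at this
    exact lt_irrefl _ this
  have hRu : IsUnit R.det := isUnit_iff_ne_zero.mpr hdetR
  have h1 : R * R⁻¹ = 1 := mul_nonsing_inv R hRu
  have h2 : R⁻¹ * R = 1 := nonsing_inv_mul R hRu
  set Y := R⁻¹ * X * R⁻¹ with hYdef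
  have hRinvH : (R⁻¹)ᴴ = R⁻¹ := hR.1.inv.eq
  have hY : Y.PosSemidef := by
    have := hX.mul_mul_conjTranspose_same R⁻¹
    rwa [hRinvH] at this
  have hXRYR : R * Y * R = X := by
    have : R * (R⁻¹ * X * R⁻¹) * R = (R * R⁻¹) * X * (R⁻¹ * R) := by
      simp only [Matrix.mul_assoc]
    rw [hYdef, this, h1, h2, one_mul, mul_one]
  have hsum : D + X = R * (1 + Y) * R := by
    rw [mul_add, add_mul, mul_one, hRR, hXRYR]
  -- spectral theorem for Y
  have hH := hY.1
  set U : Matrix n n ℝ := (hH.eigenvectorUnitary : Matrix n n ℝ) with hUdef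
  set μ : n → ℝ := hH.eigenvalues with hμdef
  have hspec : Y = U * diagonal μ * star U := by
    have := hH.spectral_theorem
    simpa [RCLike.ofReal_real_eq_id] using this
  have hU1 : U * star U = 1 := mem_unitaryGroup_iff.mp (hH.eigenvectorUnitary).2
  have h1Y : 1 + Y = U * diagonal (fun i => 1 + μ i) * star U := by
    have hd : diagonal (fun i => 1 + μ i) = 1 + diagonal μ := by
      rw [← diagonal_one, diagonal_add]
    rw [hd, mul_add, add_mul, mul_one, hU1, ← hspec]
  have hdet1Y : (1 + Y).det = ∏ i, (1 + μ i) := by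
    have hUU : U.det * (star U).det = 1 := by rw [← det_mul, hU1, det_one]
    rw [h1Y, det_mul, det_mul, det_diagonal]
    ring_nf
    rw [mul_comm U.det, mul_assoc, hUU, mul_one]
  have hμ0 : ∀ i, 0 ≤ μ i := hY.eigenvalues_nonneg
  have hYne : Y ≠ 0 := by
    intro h
    apply hX0
    rw [← hXRYR, h, mul_zero, zero_mul]
  obtain ⟨i₀, hi₀⟩ : ∃ i, μ i ≠ 0 := by
    by_contra h
    push_neg at h
    apply hYne
    rw [hspec]
    have : diagonal μ = 0 := by
      have : μ = 0 := funext h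
      rw [this]
      exact diagonal_zero
    rw [this, mul_zero, zero_mul]
  have hprod : 1 < ∏ i, (1 + μ i) := by
    have hle : ∀ i ∈ Finset.univ, (1:ℝ) ≤ 1 + μ i := fun i _ => by linarith [hμ0 i]
    have h1 : (1:ℝ) < 1 + μ i₀ := by
      have := lt_of_le_of_ne (hμ0 i₀) (Ne.symm hi₀)
      linarith
    calc (1:ℝ) = ∏ _i : n, (1:ℝ) := by simp
    _ < ∏ i, (1 + μ i) := Finset.prod_lt_prod (fun i _ => one_pos) hle ⟨i₀, Finset.mem_univ i₀, h1⟩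
  have hfinal : (D + X).det = D.det * ∏ i, (1 + μ i) := by
    rw [hsum, det_mul, det_mul, hdet1Y, ← hRR, det_mul]
    ring
  rw [hfinal]
  exact lt_mul_of_one_lt_right hD.det_pos hprod

omit [DecidableEq n] [DecidableEq m] in
/-- Positive definiteness is preserved by reindexing along an equivalence. -/
lemma posDef_submatrix_equiv {M : Matrix n n ℝ} (hM : M.PosDef) (e : m ≃ n) :
    (M.submatrix e e).PosDef := by
  refine posDef_iff_dotProduct_mulVec.mpr ⟨(isHermitian_submatrix_equiv e).mpr hM.1, fun x hx => ?_⟩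
  have hx' : x ∘ e.symm ≠ 0 := by
    intro h
    apply hx
    funext i
    have := congrFun h (e i)
    simpa using this
  have hstar : star x = star (x ∘ e.symm) ∘ e := by
    funext i; simp
  rw [submatrix_mulVec_equiv, hstar, comp_equiv_dotProduct_comp_equiv]
  exact hM.dotProduct_mulVec_pos hx'

omit [DecidableEq m] [DecidableEq l] in
/-- The top-left block of a positive definite block matrix is positive definite. -/
lemma posDef_of_fromBlocks₁₁ {A : Matrix m m ℝ} {B : Matrix m l ℝ} {C : Matrix l m ℝ}
    {D : Matrix l l ℝ} (h : (fromBlocks A B C D).PosDef) : A.PosDef := by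
  rw [posDef_iff_dotProduct_mulVec]
  constructor
  · ext i j
    have := congrFun (congrFun h.1 (Sum.inl i)) (Sum.inl j)
    simpa using this
  · intro x hx
    have hx' : (Sum.elim x (0 : l → ℝ)) ≠ 0 := by
      intro hz
      exact hx (funext fun i => congrFun hz (Sum.inl i))
    have := h.dotProduct_mulVec_pos hx'
    simpa only [Function.star_sumElim, star_zero, fromBlocks_mulVec, Sum.elim_comp_inl,
      Sum.elim_comp_inr, mulVec_zero, add_zero, sumElim_dotProduct_sumElim,
      zero_dotProduct] using this

omit [DecidableEq m] [DecidableEq l] in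
/-- The bottom-right block of a positive definite block matrix is positive definite. -/
lemma posDef_of_fromBlocks₂₂ {A : Matrix m m ℝ} {B : Matrix m l ℝ} {C : Matrix l m ℝ}
    {D : Matrix l l ℝ} (h : (fromBlocks A B C D).PosDef) : D.PosDef := by
  rw [posDef_iff_dotProduct_mulVec]
  constructor
  · ext i j
    have := congrFun (congrFun h.1 (Sum.inr i)) (Sum.inr j)
    simpa using this
  · intro x hx
    have hx' : (Sum.elim (0 : m → ℝ) x) ≠ 0 := by
      intro hz
      exact hx (funext fun i => congrFun hz (Sum.inr i))
    have := h.dotProduct_mulVec_pos hx'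
    simpa only [Function.star_sumElim, star_zero, fromBlocks_mulVec, Sum.elim_comp_inl,
      Sum.elim_comp_inr, mulVec_zero, zero_add, sumElim_dotProduct_sumElim,
      dotProduct_zero, zero_dotProduct] using this

omit [DecidableEq m] [DecidableEq l] in
/-- A block diagonal matrix with positive definite blocks is positive definite. -/
lemma posDef_fromBlocks_diag {A : Matrix m m ℝ} {D : Matrix l l ℝ}
    (hA : A.PosDef) (hD : D.PosDef) : (fromBlocks A 0 0 D).PosDef := by
  rw [posDef_iff_dotProduct_mulVec]
  constructor
  · show (fromBlocks A 0 0 D)ᴴ = _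
    rw [fromBlocks_conjTranspose]
    simp only [conjTranspose_zero, hA.1.eq, hD.1.eq]
  · intro x hx
    have hdecomp : x = Sum.elim (x ∘ Sum.inl) (x ∘ Sum.inr) := by
      funext i; cases i <;> rfl
    rw [hdecomp, Function.star_sumElim, fromBlocks_mulVec, sumElim_dotProduct_sumElim]
    simp only [zero_mulVec, add_zero, zero_add]
    by_cases h1 : x ∘ Sum.inl = 0
    · have h2 : x ∘ Sum.inr ≠ 0 := by
        intro h2
        exact hx (by rw [hdecomp, h1, h2]; funext i; cases i <;> rfl)
      exact add_pos_of_nonneg_of_pos (hA.posSemidef.dotProduct_mulVec_nonneg _) (hD.dotProduct_mulVec_pos h2)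
    · exact add_pos_of_pos_of_nonneg (hA.dotProduct_mulVec_pos h1) (hD.posSemidef.dotProduct_mulVec_nonneg _)

/-- Strict Fischer inequality: if a positive definite block matrix has a nonzero off-diagonal
block, its determinant is strictly smaller than the product of the determinants of the
diagonal blocks. -/
lemma fischer_strict {A : Matrix m m ℝ} {B : Matrix m l ℝ} {D : Matrix l l ℝ}
    (hM : (fromBlocks A B Bᴴ D).PosDef) (hB : B ≠ 0) :
    (fromBlocks A B Bᴴ D).det < A.det * D.det := by
  have hA : A.PosDef := posDef_of_fromBlocks₁₁ hM
  have hD : D.PosDef := posDef_of_fromBlocks₂₂ hM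
  haveI : Invertible A := A.invertibleOfIsUnitDet (isUnit_iff_ne_zero.mpr hA.det_pos.ne')
  have hdetM : (fromBlocks A B Bᴴ D).det = A.det * (D - Bᴴ * A⁻¹ * B).det := by
    rw [det_fromBlocks₁₁, invOf_eq_nonsing_inv]
  have hSchur : (D - Bᴴ * A⁻¹ * B).PosSemidef :=
    (PosDef.fromBlocks₁₁ B D hA).mp hM.posSemidef
  have hX : (Bᴴ * A⁻¹ * B).PosSemidef := hA.posSemidef.inv.conjTranspose_mul_mul_same B
  have hXne : Bᴴ * A⁻¹ * B ≠ 0 := by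
    intro h0
    apply hB
    have hAinv : (A⁻¹).PosDef := hA.inv
    ext a k
    by_contra hc
    have hcol : (fun a => B a k) ≠ 0 := fun hz => hc (by simpa using congrFun hz a)
    have hq := hAinv.dotProduct_mulVec_pos hcol
    have hkk : (Bᴴ * A⁻¹ * B) k k
        = dotProduct (star (fun a => B a k)) (A⁻¹ *ᵥ (fun a => B a k)) := by
      simp only [mul_apply, conjTranspose_apply, dotProduct, mulVec, star_trivial]
      simp_rw [Finset.sum_mul, Finset.mul_sum]
      rw [Finset.sum_comm]
      exact Finset.sum_congr rfl fun x _ => Finset.sum_congr rfl fun y _ => by ring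
    rw [h0] at hkk
    simp only [Matrix.zero_apply] at hkk
    rw [← hkk] at hq
    exact lt_irrefl _ hq
  have hSchurDet : (D - Bᴴ * A⁻¹ * B).det ≠ 0 := by
    have h1 := hM.det_pos
    rw [hdetM] at h1
    intro h0
    rw [h0, mul_zero] at h1
    exact lt_irrefl _ h1
  have hSchurPD := psd_posDef_of_det_ne_zero hSchur hSchurDet
  have hlt := det_lt_det_add_psd hSchurPD hX hXne
  rw [sub_add_cancel] at hlt
  rw [hdetM]
  exact mul_lt_mul_of_pos_left hlt hA.det_pos

omit [DecidableEq m] [DecidableEq l] in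
lemma trace_fromBlocks' (A : Matrix m m ℝ) (B : Matrix m l ℝ) (C : Matrix l m ℝ)
    (D : Matrix l l ℝ) : (fromBlocks A B C D).trace = A.trace + D.trace := by
  simp [Matrix.trace, Fintype.sum_sum_type, Matrix.diag]

end GlassoHelpers

/-- Key lemma: if `|S k l| ≤ lam` whenever `k` and `l` are separated by the predicate `P`,
then any graphical lasso solution vanishes across `P`. -/
lemma glasso_zero_cross {n : Type*} [Fintype n] [DecidableEq n]
    (S Θ : Matrix n n ℝ) (lam : ℝ)
    (hΘ : IsGlassoSol lam S Θ) (P : n → Prop)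
    (hS' : ∀ k l, ¬(P k ↔ P l) → |S k l| ≤ lam) :
    ∀ i j, ¬(P i ↔ P j) → Θ i j = 0 := by
  classical
  by_contra hcon
  push_neg at hcon
  obtain ⟨i, j, hPij, hij⟩ := hcon
  have hpd1 : Θ.PosDef := hΘ.1
  have hsymmΘ : ∀ a b, Θ b a = Θ a b := fun a b => by
    have := congrFun (congrFun hpd1.1 a) b
    simpa [conjTranspose_apply] using this
  -- the block-censored matrix
  set Θt : Matrix n n ℝ := Matrix.of (fun a b => if P a ↔ P b then Θ a b else 0) with hΘtdef
  have hΘtapp : ∀ a b, Θt a b = if P a ↔ P b then Θ a b else 0 := fun a b => rfl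
  -- positive definiteness of Θt
  have hΘtpd : Θt.PosDef := by
    rw [posDef_iff_dotProduct_mulVec]
    constructor
    · ext a b
      simp only [conjTranspose_apply, hΘtapp, star_trivial]
      by_cases h : P a ↔ P b
      · rw [if_pos h.symm, if_pos h, hsymmΘ]
      · rw [if_neg (fun h' => h h'.symm), if_neg h]
    · intro x hx
      set y : n → ℝ := fun a => (if P a then (1:ℝ) else -1) * x a with hydef
      have hy : y ≠ 0 := by
        intro h0
        apply hx
        funext a
        have := congrFun h0 a
        by_cases h : P a <;> simpa [hydef, h] using this
      have hquad : dotProduct (star x) (Θt *ᵥ x)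
          = (1/2) * (dotProduct (star x) (Θ *ᵥ x) + dotProduct (star y) (Θ *ᵥ y)) := by
        simp only [dotProduct, mulVec, star_trivial, mul_add, Finset.mul_sum,
          ← Finset.sum_add_distrib]
        refine Finset.sum_congr rfl fun a _ => ?_
        refine Finset.sum_congr rfl fun b _ => ?_
        simp only [hΘtapp, hydef]
        by_cases ha : P a <;> by_cases hb : P b <;>
          · simp [ha, hb]
            try ring
      rw [hquad]
      have h1 := hpd1.dotProduct_mulVec_pos hx
      have h2 := hpd1.dotProduct_mulVec_pos hy
      positivity
  -- objective comparison: trace + l1 part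
  have htr : ∀ X : Matrix n n ℝ, (S * X).trace = ∑ a, ∑ b, S a b * X b a := by
    intro X
    simp [Matrix.trace, Matrix.mul_apply, Matrix.diag]
  have hcomb : ∀ X : Matrix n n ℝ, (S * X).trace + lam * ∑ a, ∑ b, |X a b|
      = ∑ a, ∑ b, (S a b * X b a + lam * |X b a|) := by
    intro X
    rw [htr X]
    have h2 : lam * ∑ a, ∑ b, |X a b| = ∑ a, ∑ b, lam * |X b a| := by
      rw [Finset.sum_comm (f := fun a b => |X a b|), Finset.mul_sum]
      exact Finset.sum_congr rfl fun a _ => Finset.mul_sum _ _ _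
    rw [h2, ← Finset.sum_add_distrib]
    exact Finset.sum_congr rfl fun a _ => (Finset.sum_add_distrib).symm
  have hT : (S * Θt).trace + lam * ∑ a, ∑ b, |Θt a b|
      ≤ (S * Θ).trace + lam * ∑ a, ∑ b, |Θ a b| := by
    rw [hcomb, hcomb]
    refine Finset.sum_le_sum fun a _ => Finset.sum_le_sum fun b _ => ?_
    by_cases h : P b ↔ P a
    · rw [hΘtapp, if_pos h]
    · rw [hΘtapp, if_neg h]
      have hSab : |S a b| ≤ lam := hS' a b (fun h' => h h'.symm)
      have habs : -(S a b * Θ b a) ≤ |S a b| * |Θ b a| := by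
        rw [← abs_mul]
        exact neg_le_abs _
      have h3 : |S a b| * |Θ b a| ≤ lam * |Θ b a| :=
        mul_le_mul_of_nonneg_right hSab (abs_nonneg _)
      simp only [mul_zero, abs_zero, add_zero]
      linarith
  -- strict determinant comparison
  set e : {a // P a} ⊕ {a // ¬ P a} ≃ n := Equiv.sumCompl P with hedef
  set Ablk : Matrix {a // P a} {a // P a} ℝ :=
    Θ.submatrix Subtype.val Subtype.val with hAdef
  set Bblk : Matrix {a // P a} {a // ¬ P a} ℝ :=
    Θ.submatrix Subtype.val Subtype.val with hBdef
  set Dblk : Matrix {a // ¬ P a} {a // ¬ P a} ℝ :=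
    Θ.submatrix Subtype.val Subtype.val with hDdef
  have hMeq : Θ.submatrix e e = fromBlocks Ablk Bblk Bblkᴴ Dblk := by
    ext a b
    cases a with
    | inl a => cases b with
      | inl b => rfl
      | inr b => rfl
    | inr a => cases b with
      | inl b =>
        show Θ a.val b.val = star (Θ b.val a.val)
        rw [star_trivial, hsymmΘ]
      | inr b => rfl
  have hMpd : (fromBlocks Ablk Bblk Bblkᴴ Dblk).PosDef := by
    rw [← hMeq]
    exact posDef_submatrix_equiv hpd1 e
  have hBne : Bblk ≠ 0 := by
    intro h0
    rcases hPij with ⟨hi, hj⟩ | ⟨hi, hj⟩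
    · exact hij (by simpa [hBdef] using congrFun (congrFun h0 ⟨i, hi⟩) ⟨j, hj⟩)
    · refine hij ?_
      rw [← hsymmΘ i j]
      simpa [hBdef] using congrFun (congrFun h0 ⟨j, hj⟩) ⟨i, hi⟩
  have hdetlt : Θ.det < Θt.det := by
    have h1 : Θ.det = (fromBlocks Ablk Bblk Bblkᴴ Dblk).det := by
      rw [← det_submatrix_equiv_self e Θ, hMeq]
    have hΘtsub : Θt.submatrix e e = fromBlocks Ablk 0 0 Dblk := by
      ext a b
      cases a with
      | inl a =>
        cases b with
        | inl b =>
          show (if P a.val ↔ P b.val then Θ a.val b.val else 0) = Ablk a b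
          rw [if_pos (iff_of_true a.prop b.prop)]
          rfl
        | inr b =>
          show (if P a.val ↔ P b.val then Θ a.val b.val else 0) = (0 : Matrix _ _ ℝ) a b
          rw [if_neg (fun h => b.prop (h.mp a.prop))]
          rfl
      | inr a =>
        cases b with
        | inl b =>
          show (if P a.val ↔ P b.val then Θ a.val b.val else 0) = (0 : Matrix _ _ ℝ) a b
          rw [if_neg (fun h => a.prop (h.mpr b.prop))]
          rfl
        | inr b =>
          show (if P a.val ↔ P b.val then Θ a.val b.val else 0) = Dblk a b
          rw [if_pos (iff_of_false a.prop b.prop)]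
          rfl
    have h2 : Θt.det = Ablk.det * Dblk.det := by
      rw [← det_submatrix_equiv_self e Θt, hΘtsub, det_fromBlocks_zero₂₁]
    rw [h1, h2]
    exact fischer_strict hMpd hBne
  have hmin := hΘ.2 Θt hΘtpd
  have hlog : Real.log Θ.det < Real.log Θt.det := Real.log_lt_log hpd1.det_pos hdetlt
  have hobj : glassoObj lam S Θt < glassoObj lam S Θ := by
    simp only [glassoObj]
    linarith [hT, hlog]
  linarith [hmin, hobj]

/-- If a graphical lasso solution is block diagonal with respect to the predicate `P`, then its
principal submatrix on `P` is a graphical lasso solution for the corresponding principal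
submatrix of `S`. -/
lemma glasso_restrict {n : Type*} [Fintype n] [DecidableEq n]
    (S Θ : Matrix n n ℝ) (lam : ℝ) (hΘ : IsGlassoSol lam S Θ) (P : n → Prop)
    [Fintype {a // P a}] [Fintype {a // ¬ P a}]
    (hzero : ∀ a b, ¬(P a ↔ P b) → Θ a b = 0) :
    IsGlassoSol lam (S.submatrix (Subtype.val : {a // P a} → n) Subtype.val)
      (Θ.submatrix (Subtype.val : {a // P a} → n) Subtype.val) := by
  classical
  set e : {a // P a} ⊕ {a // ¬ P a} ≃ n := Equiv.sumCompl P with hedef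
  set Ab : Matrix {a // P a} {a // P a} ℝ := Θ.submatrix Subtype.val Subtype.val with hAbdef
  set Db : Matrix {a // ¬ P a} {a // ¬ P a} ℝ := Θ.submatrix Subtype.val Subtype.val with hDbdef
  have hΘeq : Θ.submatrix e e = fromBlocks Ab 0 0 Db := by
    ext a b
    cases a with
    | inl a =>
      cases b with
      | inl b => rfl
      | inr b =>
        show Θ a.val b.val = (0 : Matrix _ _ ℝ) a b
        rw [hzero a.val b.val (fun h => b.prop (h.mp a.prop))]
        rfl
    | inr a =>
      cases b with
      | inl b =>
        show Θ a.val b.val = (0 : Matrix _ _ ℝ) a b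
        rw [hzero a.val b.val (fun h => a.prop (h.mpr b.prop))]
        rfl
      | inr b => rfl
  have hsubpd : (fromBlocks Ab 0 0 Db).PosDef := hΘeq ▸ posDef_submatrix_equiv hΘ.1 e
  have hAb : Ab.PosDef := posDef_of_fromBlocks₁₁ hsubpd
  have hDb : Db.PosDef := posDef_of_fromBlocks₂₂ hsubpd
  have hΘrec : Θ = (fromBlocks Ab 0 0 Db).submatrix e.symm e.symm := by
    rw [← hΘeq]
    ext a b
    simp
  have htrace_reindex : ∀ X : Matrix n n ℝ, ((X.submatrix e e)).trace = X.trace := by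
    intro X
    simp only [Matrix.trace, Matrix.diag, submatrix_apply]
    exact Equiv.sum_comp e fun i => X i i
  -- objective splitting
  have hsplit : ∀ (Ψ : Matrix {a // P a} {a // P a} ℝ), Ψ.PosDef →
      glassoObj lam S ((fromBlocks Ψ 0 0 Db).submatrix e.symm e.symm)
        = glassoObj lam (S.submatrix (Subtype.val : {a // P a} → n) Subtype.val) Ψ
          + glassoObj lam (S.submatrix (Subtype.val : {a // ¬ P a} → n) Subtype.val) Db := by
    intro Ψ hΨ
    set ΨM : Matrix n n ℝ := (fromBlocks Ψ 0 0 Db).submatrix e.symm e.symm with hΨMdef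
    have hΨMsub : ΨM.submatrix e e = fromBlocks Ψ 0 0 Db := by
      ext a b
      simp [hΨMdef]
    have hdet : ΨM.det = Ψ.det * Db.det := by
      rw [hΨMdef, det_submatrix_equiv_self, det_fromBlocks_zero₂₁]
    have hSsub : S.submatrix e e =
        fromBlocks (S.submatrix Subtype.val Subtype.val) (S.submatrix Subtype.val Subtype.val)
          (S.submatrix Subtype.val Subtype.val) (S.submatrix Subtype.val Subtype.val) := by
      ext a b
      cases a <;> cases b <;> rfl
    have htrace : (S * ΨM).trace
        = ((S.submatrix (Subtype.val : {a // P a} → n) Subtype.val) * Ψ).trace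
          + ((S.submatrix (Subtype.val : {a // ¬ P a} → n) Subtype.val) * Db).trace := by
      rw [← htrace_reindex (S * ΨM), ← submatrix_mul_equiv S ΨM e e e, hΨMsub, hSsub,
        fromBlocks_multiply]
      rw [trace_fromBlocks']
      simp
    have habs : (∑ i, ∑ j, |ΨM i j|)
        = (∑ i, ∑ j, |Ψ i j|) + (∑ i, ∑ j, |Db i j|) := by
      have h1 : (∑ i, ∑ j, |ΨM i j|) = ∑ a, ∑ b, |ΨM (e a) (e b)| := by
        rw [← Equiv.sum_comp e (fun i => ∑ j, |ΨM i j|)]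
        exact Finset.sum_congr rfl fun a _ =>
          (Equiv.sum_comp e (fun j => |ΨM (e a) j|)).symm
      rw [h1]
      have h2 : ∀ a b, ΨM (e a) (e b) = fromBlocks Ψ 0 0 Db a b := by
        intro a b
        have := congrFun (congrFun hΨMsub a) b
        simpa using this
      simp_rw [h2]
      rw [Fintype.sum_sum_type]
      simp [Fintype.sum_sum_type, fromBlocks]
    have hlogdet : Real.log ΨM.det = Real.log Ψ.det + Real.log Db.det := by
      rw [hdet, Real.log_mul hΨ.det_pos.ne' hDb.det_pos.ne']
    simp only [glassoObj, ← hΨMdef]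
    rw [hlogdet, htrace, habs]
    ring
  refine ⟨hAb, fun Ψ hΨ => ?_⟩
  have hΨM : ((fromBlocks Ψ 0 0 Db).submatrix e.symm e.symm).PosDef :=
    posDef_submatrix_equiv (posDef_fromBlocks_diag hΨ hDb) e.symm
  have h := hΘ.2 _ hΨM
  rw [hΘrec] at h
  rw [hsplit Ab hAb, hsplit Ψ hΨ] at h
  linarith

open Classical in
/-- the graphical lasso solution vanishes across distinct connected components of
the thresholded sample covariance graph, and on each component (the reachability class of any
vertex `v`) its principal submatrix solves the graphical lasso problem for the corresponding
principal submatrix of `S`. -/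
theorem glasso_splits_along_cov_components
    (p : ℕ) (hp : 1 ≤ p) (S : Matrix (Fin p) (Fin p) ℝ) (hS : S.PosSemidef)
    (lam : ℝ) (hlam : 0 < lam)
    (Θ : Matrix (Fin p) (Fin p) ℝ) (hΘ : IsGlassoSol lam S Θ) :
    (∀ i j : Fin p, ¬ (covGraph lam S).Reachable i j → Θ i j = 0) ∧
    (∀ v : Fin p,
      IsGlassoSol lam
        (S.submatrix (Subtype.val : {i : Fin p // (covGraph lam S).Reachable v i} → Fin p)
          Subtype.val)
        (Θ.submatrix (Subtype.val : {i : Fin p // (covGraph lam S).Reachable v i} → Fin p)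
          Subtype.val)) := by
  have hSbound : ∀ (v k l : Fin p),
      ¬((covGraph lam S).Reachable v k ↔ (covGraph lam S).Reachable v l) → |S k l| ≤ lam := by
    intro v k l h
    by_contra hgt
    push_neg at hgt
    have hkl : k ≠ l := by
      rintro rfl
      exact h Iff.rfl
    have hadj : (covGraph lam S).Adj k l := by
      rw [covGraph, SimpleGraph.fromRel_adj]
      exact ⟨hkl, Or.inl hgt⟩
    exact h ⟨fun hvk => hvk.trans hadj.reachable, fun hvl => hvl.trans hadj.symm.reachable⟩
  constructor
  · intro i j hnr
    exact glasso_zero_cross S Θ lam hΘ (fun k => (covGraph lam S).Reachable i k)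
      (hSbound i) i j
      (fun hiff => hnr (hiff.mp (SimpleGraph.Reachable.refl i)))
  · intro v
    exact glasso_restrict S Θ lam hΘ (fun k => (covGraph lam S).Reachable v k)
      (glasso_zero_cross S Θ lam hΘ (fun k => (covGraph lam S).Reachable v k) (hSbound v))
end
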